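/- Let ν be real, let m, n be nonnegative integers, and define on the open unit disk D the function ψ_{m,n}^ν = (∇_{ν−1} ∘ ∇_{ν−2} ∘ ⋯ ∘ ∇_{ν−m})( z^n (1−|z|²)^{ν−m} ). Then ψ_{m,n}^ν satisfies 𝔏_ν ψ_{m,n}^ν = (ν(2m+1) − m(m+1)) · ψ_{m,n}^ν on D. -/

import Mathlib

open MeasureTheory

/-- Wirtinger derivative `∂f/∂z = ½(∂f/∂x − i ∂f/∂y)`. -/
noncomputable def wirtZ (f : ℂ → ℂ) (z : ℂ) : ℂ :=
  (1 / 2 : ℂ) * (fderiv ℝ f z 1 - Complex.I * fderiv ℝ f z Complex.I)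

/-- Wirtinger derivative `∂f/∂z̄ = ½(∂f/∂x + i ∂f/∂y)`. -/
noncomputable def wirtZbar (f : ℂ → ℂ) (z : ℂ) : ℂ :=
  (1 / 2 : ℂ) * (fderiv ℝ f z 1 + Complex.I * fderiv ℝ f z Complex.I)

/-- The first order operator `∇_α f = −(1−|z|²) ∂f/∂z + α z̄ f`. -/
noncomputable def nablaOp (α : ℝ) (f : ℂ → ℂ) (z : ℂ) : ℂ :=
  -(((1 - ‖z‖ ^ 2 : ℝ)) : ℂ) * wirtZ f z + (α : ℂ) * (starRingEnd ℂ z) * f z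

/-- The formal adjoint `∇_α^* f = (1−|z|²) ∂f/∂z̄ + (α+1) z f`. -/
noncomputable def nablaStar (α : ℝ) (f : ℂ → ℂ) (z : ℂ) : ℂ :=
  (((1 - ‖z‖ ^ 2 : ℝ)) : ℂ) * wirtZbar f z + ((α : ℂ) + 1) * z * f z

/-- The magnetic Laplacian `L_ν`. -/
noncomputable def magL (ν : ℝ) (f : ℂ → ℂ) (z : ℂ) : ℂ :=
  -(((1 - ‖z‖ ^ 2 : ℝ)) : ℂ) ^ 2 * wirtZ (wirtZbar f) z
    - (ν : ℂ) * (((1 - ‖z‖ ^ 2 : ℝ)) : ℂ) *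
        (z * wirtZ f z - (starRingEnd ℂ z) * wirtZbar f z)
    + (ν : ℂ) ^ 2 * ((‖z‖ ^ 2 : ℝ) : ℂ) * f z

/-- `∇_{ν−1} ∘ ∇_{ν−2} ∘ ⋯ ∘ ∇_{ν−m}` (identity for `m = 0`). -/
noncomputable def nablaChain (ν : ℝ) : ℕ → (ℂ → ℂ) → (ℂ → ℂ)
  | 0, f => f
  | m + 1, f => nablaOp (ν - 1) (nablaChain (ν - 1) m f)

namespace MagLAux
open MvPolynomial

/-! ### Polynomial layer -/

noncomputable def uP : MvPolynomial (Fin 2) ℂ := 1 - X 0 * X 1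

lemma pderiv_comm' (p : MvPolynomial (Fin 2) ℂ) :
    pderiv 1 (pderiv 0 p) = pderiv 0 (pderiv 1 p) := by
  induction p using MvPolynomial.induction_on with
  | C a => simp
  | add p q hp hq => simp [hp, hq]
  | mul_X p i hp =>
    fin_cases i <;>
      simp [pderiv_mul, hp, pderiv_X_of_ne (show (0:Fin 2) ≠ 1 by decide),
        pderiv_X_of_ne (show (1:Fin 2) ≠ 0 by decide)] <;> ring

lemma pderiv1_X0_pow (n : ℕ) :
    pderiv (1 : Fin 2) (X 0 ^ n : MvPolynomial (Fin 2) ℂ) = 0 := by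
  induction n with
  | zero => simp
  | succ n ih =>
      rw [pow_succ, pderiv_mul, ih]
      simp [pderiv_X_of_ne (show (0:Fin 2) ≠ 1 by decide)]

noncomputable def Np (c : ℂ) (p : MvPolynomial (Fin 2) ℂ) : MvPolynomial (Fin 2) ℂ :=
  C c * X 1 * p - uP * pderiv 0 p

noncomputable def Ep (ν t : ℂ) (p : MvPolynomial (Fin 2) ℂ) : MvPolynomial (Fin 2) ℂ :=
  C (ν^2 - t^2 + t) * (X 0 * X 1) * p + C t * uP * p
    + C (t - ν) * uP * X 0 * pderiv 0 p + C (t + ν) * uP * X 1 * pderiv 1 p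
    - uP * uP * pderiv 0 (pderiv 1 p)

lemma pderiv_ofNat (i : Fin 2) (n : ℕ) [n.AtLeastTwo] :
    pderiv i (OfNat.ofNat n : MvPolynomial (Fin 2) ℂ) = 0 := by
  rw [← map_ofNat (C : ℂ →+* MvPolynomial (Fin 2) ℂ) n, pderiv_C]

set_option maxHeartbeats 1600000 in
lemma intertwine (ν t : ℂ) (p : MvPolynomial (Fin 2) ℂ) :
    Ep ν t (Np (ν - 1 + t) p)
      = Np (ν - 1 + t) (Ep (ν - 1) t p) + C (2*ν - 1) * Np (ν - 1 + t) p := by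
  simp only [Ep, Np, uP, map_sub, map_add, map_mul, map_one, map_zero, map_pow, map_ofNat,
    pderiv_mul, pderiv_C, pderiv_pow, pderiv_ofNat, pderiv_X_self, pderiv_one,
    pderiv_X_of_ne (show (0:Fin 2) ≠ 1 by decide),
    pderiv_X_of_ne (show (1:Fin 2) ≠ 0 by decide), pderiv_comm']
  ring

noncomputable def Pch (n : ℕ) : ℕ → ℝ → MvPolynomial (Fin 2) ℂ
  | 0, _ => X 0 ^ n
  | m+1, ν => Np ((ν:ℂ) - 1 + ((ν:ℂ) - 1 - m)) (Pch n m (ν-1))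

lemma Np_C_mul (c a : ℂ) (p : MvPolynomial (Fin 2) ℂ) :
    Np c (C a * p) = C a * Np c p := by
  simp [Np, pderiv_C_mul]; ring

lemma eigen (n : ℕ) : ∀ (m : ℕ) (ν : ℝ),
    Ep (ν:ℂ) ((ν:ℂ) - m) (Pch n m ν)
      = C ((ν:ℂ) * (2*m+1) - m*(m+1)) * Pch n m ν := by
  intro m
  induction m with
  | zero =>
      intro ν
      simp only [Pch, Nat.cast_zero, sub_zero, Ep, pderiv1_X0_pow, map_zero, uP]
      have h1 : (ν:ℂ)^2 - ν^2 + ν = ν := by ring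
      have h2 : (ν:ℂ) - ν = 0 := by ring
      have h3 : (ν:ℂ) * (2*0+1) - 0*(0+1) = ν := by ring
      rw [h1, h2, h3]
      simp only [map_zero, zero_mul, mul_zero, add_zero, sub_zero]
      ring
  | succ m ih =>
      intro ν
      have hc : ((ν:ℂ) - (m+1 : ℕ)) = ((ν:ℂ) - 1 - m) := by push_cast; ring
      rw [show (Pch n (m+1) ν) = Np ((ν:ℂ) - 1 + ((ν:ℂ) - 1 - m)) (Pch n m (ν-1)) from rfl,
        hc, intertwine]
      have ihv := ih (ν - 1)
      have hcast : (((ν:ℝ) - 1 : ℝ):ℂ) = (ν:ℂ) - 1 := by push_cast; ring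
      rw [hcast] at ihv
      rw [ihv, Np_C_mul]
      rw [← add_mul, ← map_add]
      congr 1
      push_cast
      ring

/-! ### Evaluation and the analytic layer -/

noncomputable def ev (p : MvPolynomial (Fin 2) ℂ) (z : ℂ) : ℂ :=
  MvPolynomial.eval (fun i => if i = 0 then z else (starRingEnd ℂ) z) p

@[simp] lemma ev_add (p q : MvPolynomial (Fin 2) ℂ) (z : ℂ) :
    ev (p + q) z = ev p z + ev q z := by simp [ev]
@[simp] lemma ev_sub (p q : MvPolynomial (Fin 2) ℂ) (z : ℂ) :
    ev (p - q) z = ev p z - ev q z := by simp [ev]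
@[simp] lemma ev_mul (p q : MvPolynomial (Fin 2) ℂ) (z : ℂ) :
    ev (p * q) z = ev p z * ev q z := by simp [ev]
@[simp] lemma ev_neg (p : MvPolynomial (Fin 2) ℂ) (z : ℂ) :
    ev (-p) z = -ev p z := by simp [ev]
@[simp] lemma ev_C (a : ℂ) (z : ℂ) : ev (C a) z = a := by simp [ev]
@[simp] lemma ev_one (z : ℂ) : ev 1 z = 1 := by simp [ev]
@[simp] lemma ev_zero (z : ℂ) : ev 0 z = 0 := by simp [ev]
@[simp] lemma ev_X0 (z : ℂ) : ev (X 0) z = z := by simp [ev]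
@[simp] lemma ev_X1 (z : ℂ) : ev (X 1) z = (starRingEnd ℂ) z := by simp [ev]
@[simp] lemma ev_pow (p : MvPolynomial (Fin 2) ℂ) (k : ℕ) (z : ℂ) :
    ev (p ^ k) z = ev p z ^ k := by simp [ev]
@[simp] lemma ev_uP (z : ℂ) : ev uP z = 1 - z * (starRingEnd ℂ) z := by simp [uP]

noncomputable def FF (t : ℝ) (p : MvPolynomial (Fin 2) ℂ) : ℂ → ℂ := fun z =>
  (((1 - ‖z‖ ^ 2) ^ t : ℝ) : ℂ) * ev p z

noncomputable def KK : ℂ →L[ℝ] ℂ := Complex.conjCLE.toContinuousLinearMap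

@[simp] lemma KK_apply (v : ℂ) : KK v = (starRingEnd ℂ) v := by
  simp [KK, Complex.conjCLE_apply]

noncomputable def DL (a b : ℂ) : ℂ →L[ℝ] ℂ :=
  a • (ContinuousLinearMap.id ℝ ℂ) + b • KK

@[simp] lemma DL_apply (a b v : ℂ) : DL a b v = a * v + b * (starRingEnd ℂ) v := by
  simp [DL, smul_eq_mul]

lemma hasFDerivAt_conj (z : ℂ) : HasFDerivAt (fun w => (starRingEnd ℂ) w) KK z := by
  have h := KK.hasFDerivAt (x := z)
  have : ⇑KK = fun w => (starRingEnd ℂ) w := by funext w; simp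
  rwa [this] at h

lemma hasFDerivAt_ev (p : MvPolynomial (Fin 2) ℂ) (z : ℂ) :
    HasFDerivAt (ev p) (DL (ev (pderiv 0 p) z) (ev (pderiv 1 p) z)) z := by
  induction p using MvPolynomial.induction_on with
  | C a =>
      have hfun : ev (C a) = fun _ : ℂ => a := by funext w; simp
      have h0 : DL (ev (pderiv 0 (C a)) z) (ev (pderiv 1 (C a)) z) = 0 := by
        ext v; simp [pderiv_C]
      rw [hfun, h0]
      exact hasFDerivAt_const a z
  | add p q hp hq =>
      have hfun : ev (p + q) = fun w => ev p w + ev q w := by funext w; simp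
      rw [hfun]
      refine (hp.add hq).congr_fderiv ?_
      ext v
      simp [map_add]
      ring
  | mul_X p i hp =>
      fin_cases i
      · show HasFDerivAt (ev (p * X 0))
          (DL (ev (pderiv 0 (p * X 0)) z) (ev (pderiv 1 (p * X 0)) z)) z
        have hfun : ev (p * X 0) = fun w => ev p w * w := by funext w; simp
        rw [hfun]
        refine ((hp.mul (hasFDerivAt_id z))).congr_fderiv ?_
        ext v
        simp [pderiv_mul, pderiv_X_self, pderiv_X_of_ne (show (0:Fin 2) ≠ 1 by decide),
          smul_eq_mul]
        ring
      · show HasFDerivAt (ev (p * X 1))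
          (DL (ev (pderiv 0 (p * X 1)) z) (ev (pderiv 1 (p * X 1)) z)) z
        have hfun : ev (p * X 1) = fun w => ev p w * (starRingEnd ℂ) w := by funext w; simp
        rw [hfun]
        refine ((hp.mul (hasFDerivAt_conj z))).congr_fderiv ?_
        ext v
        simp [pderiv_mul, pderiv_X_self, pderiv_X_of_ne (show (1:Fin 2) ≠ 0 by decide),
          smul_eq_mul]
        ring

lemma re_helper (z v : ℂ) :
    (((z * (starRingEnd ℂ) v + (starRingEnd ℂ) z * v).re : ℝ) : ℂ)
      = z * (starRingEnd ℂ) v + (starRingEnd ℂ) z * v := by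
  have h : (starRingEnd ℂ) z * v = (starRingEnd ℂ) (z * (starRingEnd ℂ) v) := by
    rw [map_mul, Complex.conj_conj]
  rw [h, Complex.add_conj, Complex.ofReal_re]

lemma hasFDerivAt_FF (t : ℝ) (p : MvPolynomial (Fin 2) ℂ) (z : ℂ)
    (hz : ‖z‖ < 1) :
    HasFDerivAt (FF t p)
      (DL (FF (t-1) (C (-(t:ℂ)) * X 1 * p + uP * pderiv 0 p) z)
          (FF (t-1) (C (-(t:ℂ)) * X 0 * p + uP * pderiv 1 p) z)) z := by
  have habs : (0:ℝ) ≤ ‖z‖ := norm_nonneg z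
  have hs : (0:ℝ) < 1 - ‖z‖ ^ 2 := by nlinarith
  have hfun : (fun w : ℂ => 1 - ‖w‖ ^ 2)
      = fun w => 1 - (w * (starRingEnd ℂ) w).re := by
    funext w
    rw [Complex.mul_conj]
    simp [Complex.sq_norm]
  have hmul : HasFDerivAt (fun w : ℂ => w * (starRingEnd ℂ) w)
      (z • KK + ((starRingEnd ℂ) z) • ContinuousLinearMap.id ℝ ℂ) z :=
    (hasFDerivAt_id z).mul (hasFDerivAt_conj z)
  have hre : HasFDerivAt (fun w : ℂ => (w * (starRingEnd ℂ) w).re)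
      (Complex.reCLM.comp (z • KK + ((starRingEnd ℂ) z) • ContinuousLinearMap.id ℝ ℂ)) z :=
    Complex.reCLM.hasFDerivAt.comp z hmul
  have hin : HasFDerivAt (fun w : ℂ => 1 - ‖w‖ ^ 2)
      (-(Complex.reCLM.comp (z • KK + ((starRingEnd ℂ) z) • ContinuousLinearMap.id ℝ ℂ))) z := by
    rw [hfun]
    simpa [Pi.sub_def] using (hasFDerivAt_const (1:ℝ) z).sub hre
  have hr : HasDerivAt (fun x : ℝ => x ^ t)
      (t * (1 - ‖z‖ ^ 2) ^ (t - 1)) (1 - ‖z‖ ^ 2) :=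
    Real.hasDerivAt_rpow_const (Or.inl hs.ne')
  have hcomp := hr.comp_hasFDerivAt z hin
  have hC := Complex.ofRealCLM.hasFDerivAt.comp z hcomp
  have hall := hC.mul (hasFDerivAt_ev p z)
  have hffun : FF t p = fun y =>
      (fun w : ℂ => ((((1 - ‖w‖ ^ 2) ^ t : ℝ)) : ℂ)) y * ev p y := rfl
  rw [hffun]
  refine hall.congr_fderiv ?_
  have hst : (1 - ‖z‖ ^ 2) ^ t
      = (1 - ‖z‖ ^ 2) ^ (t-1) * (1 - ‖z‖ ^ 2) := by
    rw [← Real.rpow_add_one hs.ne' (t-1)]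
    norm_num
  ext v
  simp only [DL_apply, FF, ContinuousLinearMap.add_apply, ContinuousLinearMap.coe_smul',
    Pi.smul_apply, ContinuousLinearMap.coe_comp', Function.comp_apply,
    ContinuousLinearMap.coe_id', id_eq, ContinuousLinearMap.neg_apply, KK_apply,
    Complex.reCLM_apply, Complex.ofRealCLM_apply, smul_eq_mul, ev_add, ev_mul, ev_C,
    ev_uP, ev_X0, ev_X1]
  have hcz' : ((‖z‖ : ℝ) : ℂ)^2 = z * (starRingEnd ℂ) z := by
    rw [← Complex.ofReal_pow, Complex.sq_norm]
    exact (Complex.mul_conj z).symm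
  rw [hst]
  push_cast
  rw [re_helper z v, hcz']
  ring

/-! ### Wirtinger derivatives of `FF` -/

lemma wirtZ_of {f : ℂ → ℂ} {a b z : ℂ} (h : HasFDerivAt f (DL a b) z) :
    wirtZ f z = a := by
  rw [wirtZ, h.fderiv]
  simp only [DL_apply, map_one, Complex.conj_I, mul_one]
  linear_combination ((b - a)/2) * Complex.I_sq

lemma wirtZbar_of {f : ℂ → ℂ} {a b z : ℂ} (h : HasFDerivAt f (DL a b) z) :
    wirtZbar f z = b := by
  rw [wirtZbar, h.fderiv]
  simp only [DL_apply, map_one, Complex.conj_I, mul_one]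
  linear_combination ((a - b)/2) * Complex.I_sq

lemma mem_ball_abs {z : ℂ} (hz : z ∈ Metric.ball (0:ℂ) 1) : ‖z‖ < 1 := by
  simpa [Complex.dist_eq] using hz

lemma wirtZ_FF (t : ℝ) (p : MvPolynomial (Fin 2) ℂ) (z : ℂ)
    (hz : z ∈ Metric.ball (0:ℂ) 1) :
    wirtZ (FF t p) z = FF (t-1) (C (-(t:ℂ)) * X 1 * p + uP * pderiv 0 p) z :=
  wirtZ_of (hasFDerivAt_FF t p z (mem_ball_abs hz))

lemma wirtZbar_FF (t : ℝ) (p : MvPolynomial (Fin 2) ℂ) (z : ℂ)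
    (hz : z ∈ Metric.ball (0:ℂ) 1) :
    wirtZbar (FF t p) z = FF (t-1) (C (-(t:ℂ)) * X 0 * p + uP * pderiv 1 p) z :=
  wirtZbar_of (hasFDerivAt_FF t p z (mem_ball_abs hz))

lemma eqOn_nhds {f g : ℂ → ℂ} {z : ℂ} (hz : z ∈ Metric.ball (0:ℂ) 1)
    (h : Set.EqOn f g (Metric.ball (0:ℂ) 1)) : f =ᶠ[nhds z] g :=
  Filter.eventuallyEq_of_mem (Metric.isOpen_ball.mem_nhds hz) h

lemma wirtZ_congr {f g : ℂ → ℂ} {z : ℂ} (h : f =ᶠ[nhds z] g) :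
    wirtZ f z = wirtZ g z := by
  rw [wirtZ, wirtZ, h.fderiv_eq]

lemma wirtZbar_congr {f g : ℂ → ℂ} {z : ℂ} (h : f =ᶠ[nhds z] g) :
    wirtZbar f z = wirtZbar g z := by
  rw [wirtZbar, wirtZbar, h.fderiv_eq]

lemma nablaOp_congr {α : ℝ} {f g : ℂ → ℂ} {z : ℂ} (h : f =ᶠ[nhds z] g) :
    nablaOp α f z = nablaOp α g z := by
  rw [nablaOp, nablaOp, wirtZ_congr h, h.eq_of_nhds]

lemma magL_congr {ν : ℝ} {f g : ℂ → ℂ} {z : ℂ}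
    (h : Set.EqOn f g (Metric.ball (0:ℂ) 1)) (hz : z ∈ Metric.ball (0:ℂ) 1) :
    magL ν f z = magL ν g z := by
  have hbar : Set.EqOn (wirtZbar f) (wirtZbar g) (Metric.ball (0:ℂ) 1) :=
    fun w hw => wirtZbar_congr (eqOn_nhds hw h)
  rw [magL, magL, wirtZ_congr (eqOn_nhds hz hbar), wirtZ_congr (eqOn_nhds hz h),
    wirtZbar_congr (eqOn_nhds hz h), (eqOn_nhds hz h).eq_of_nhds]

/-! ### The operators on `FF` -/

lemma aux_facts (z : ℂ) (hz : z ∈ Metric.ball (0:ℂ) 1) :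
    (0:ℝ) < 1 - ‖z‖ ^ 2 := by
  have h1 := mem_ball_abs hz
  have h2 : (0:ℝ) ≤ ‖z‖ := norm_nonneg z
  nlinarith

lemma nablaOp_FF (α t : ℝ) (p : MvPolynomial (Fin 2) ℂ) (z : ℂ)
    (hz : z ∈ Metric.ball (0:ℂ) 1) :
    nablaOp α (FF t p) z = FF t (Np ((α:ℂ) + t) p) z := by
  have hs := aux_facts z hz
  have hst : (1 - ‖z‖ ^ 2) ^ t
      = (1 - ‖z‖ ^ 2) ^ (t-1) * (1 - ‖z‖ ^ 2) := by
    rw [← Real.rpow_add_one hs.ne' (t-1)]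
    norm_num
  have hcz' : ((‖z‖ : ℝ) : ℂ)^2 = z * (starRingEnd ℂ) z := by
    rw [← Complex.ofReal_pow, Complex.sq_norm]
    exact (Complex.mul_conj z).symm
  rw [nablaOp, wirtZ_FF t p z hz]
  simp only [FF, Np, uP, ev_sub, ev_add, ev_mul, ev_C, ev_X0, ev_X1, ev_one]
  rw [hst]
  push_cast
  rw [hcz']
  ring

lemma magL_FF (ν t : ℝ) (p : MvPolynomial (Fin 2) ℂ) (z : ℂ)
    (hz : z ∈ Metric.ball (0:ℂ) 1) :
    magL ν (FF t p) z = FF t (Ep (ν:ℂ) (t:ℂ) p) z := by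
  have hs := aux_facts z hz
  have hst : (1 - ‖z‖ ^ 2) ^ t
      = (1 - ‖z‖ ^ 2) ^ (t-1) * (1 - ‖z‖ ^ 2) := by
    rw [← Real.rpow_add_one hs.ne' (t-1)]
    norm_num
  have hst2 : (1 - ‖z‖ ^ 2) ^ (t-1)
      = (1 - ‖z‖ ^ 2) ^ (t-2) * (1 - ‖z‖ ^ 2) := by
    rw [← Real.rpow_add_one hs.ne' (t-2)]
    ring_nf
  have hcz' : ((‖z‖ : ℝ) : ℂ)^2 = z * (starRingEnd ℂ) z := by
    rw [← Complex.ofReal_pow, Complex.sq_norm]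
    exact (Complex.mul_conj z).symm
  have hbar : Set.EqOn (wirtZbar (FF t p))
      (FF (t-1) (C (-(t:ℂ)) * X 0 * p + uP * pderiv 1 p)) (Metric.ball (0:ℂ) 1) :=
    fun w hw => wirtZbar_FF t p w hw
  have h1 : wirtZ (wirtZbar (FF t p)) z
      = wirtZ (FF (t-1) (C (-(t:ℂ)) * X 0 * p + uP * pderiv 1 p)) z :=
    wirtZ_congr (eqOn_nhds hz hbar)
  rw [magL, h1, wirtZ_FF (t-1) _ z hz, wirtZ_FF t p z hz, wirtZbar_FF t p z hz]
  simp only [FF, Ep, uP, ev_sub, ev_add, ev_mul, ev_C, ev_X0, ev_X1, ev_one,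
    map_add, map_sub, map_mul, map_one, map_zero, map_neg,
    pderiv_mul, pderiv_C, pderiv_X_self, pderiv_one,
    pderiv_X_of_ne (show (0:Fin 2) ≠ 1 by decide),
    pderiv_X_of_ne (show (1:Fin 2) ≠ 0 by decide), ev_neg, ev_zero]
  rw [hst, hst2]
  push_cast
  rw [hcz']
  ring

/-! ### Representation of the chain -/

lemma chain_repr (n : ℕ) : ∀ (m : ℕ) (ν : ℝ), Set.EqOn
    (nablaChain ν m (fun w => w ^ n * (((1 - ‖w‖ ^ 2) ^ (ν - m) : ℝ) : ℂ)))
    (FF (ν - m) (Pch n m ν)) (Metric.ball (0:ℂ) 1) := by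
  intro m
  induction m with
  | zero =>
      intro ν z hz
      show (fun w : ℂ => w ^ n * (((1 - ‖w‖ ^ 2) ^ (ν - (0:ℕ)) : ℝ) : ℂ)) z
        = FF (ν - (0:ℕ)) (Pch n 0 ν) z
      simp only [Pch, FF, ev_pow, ev_X0]
      ring
  | succ m ih =>
      intro ν z hz
      have hcast : ν - ((m+1 : ℕ) : ℝ) = (ν - 1) - (m:ℝ) := by push_cast; ring
      show nablaOp (ν - 1) (nablaChain (ν - 1) m
          (fun w => w ^ n * (((1 - ‖w‖ ^ 2) ^ (ν - ((m+1:ℕ):ℝ)) : ℝ) : ℂ))) z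
        = FF (ν - ((m+1:ℕ):ℝ)) (Pch n (m+1) ν) z
      rw [hcast]
      have hEq : Set.EqOn (nablaChain (ν - 1) m
            (fun w => w ^ n * (((1 - ‖w‖ ^ 2) ^ ((ν - 1) - (m:ℝ)) : ℝ) : ℂ)))
          (FF ((ν - 1) - (m:ℝ)) (Pch n m (ν - 1))) (Metric.ball (0:ℂ) 1) := ih (ν - 1)
      rw [nablaOp_congr (eqOn_nhds hz hEq), nablaOp_FF (ν - 1) ((ν - 1) - (m:ℝ)) _ z hz]
      rw [show (Pch n (m+1) ν) = Np ((ν:ℂ) - 1 + ((ν:ℂ) - 1 - m)) (Pch n m (ν-1)) from rfl]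
      rw [show (((ν - 1 : ℝ)):ℂ) + ((((ν - 1) - (m:ℝ)) : ℝ):ℂ)
        = (ν:ℂ) - 1 + ((ν:ℂ) - 1 - m) by push_cast; ring]

end MagLAux

open MagLAux MvPolynomial in
theorem magL_eigenfunctions (ν : ℝ) (m n : ℕ) :
    ∀ z ∈ Metric.ball (0 : ℂ) 1,
      magL ν (nablaChain ν m
          (fun w => w ^ n * (((1 - ‖w‖ ^ 2) ^ (ν - m) : ℝ) : ℂ))) z
        = ((ν * (2 * m + 1) - m * (m + 1) : ℝ) : ℂ) *
            nablaChain ν m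
              (fun w => w ^ n * (((1 - ‖w‖ ^ 2) ^ (ν - m) : ℝ) : ℂ)) z := by
  intro z hz
  have hrep := chain_repr n m ν
  rw [magL_congr hrep hz, magL_FF ν (ν - m) (Pch n m ν) z hz]
  rw [show (((ν - (m:ℝ) : ℝ)):ℂ) = (ν:ℂ) - m by push_cast; ring]
  rw [eigen n m ν]
  rw [hrep hz]
  simp only [FF, ev_mul, ev_C]
  push_cast
  ring
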